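/- Adding a data point cannot decrease eigenfunction learnability: if T = Λ^{1/2} (Λ^{1/2} Φ Φᵀ Λ^{1/2})(Λ^{1/2} Φ Φᵀ Λ^{1/2})⁺ Λ^{−1/2} and T⁺ is the same expression with ΦΦᵀ replaced by ΦΦᵀ + ξξᵀ for a vector ξ orthogonal to the columns of Φ, then T⁺_{ii} ≥ T_{ii} for every i. -/
import Mathlib


open Matrix

/-- `G` satisfies the four Penrose conditions for `A`, i.e. `G = A⁺`. -/
def IsMoorePenroseInv {m : Type*} [Fintype m] [DecidableEq m]
    (A G : Matrix m m ℝ) : Prop :=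
  A * G * A = A ∧ G * A * G = G ∧ (A * G)ᵀ = A * G ∧ (G * A)ᵀ = G * A

theorem learnability_monotone_in_data
    (M n : ℕ)
    (lam : Fin M → ℝ) (hpos : ∀ k, 0 < lam k)
    (Φ : Matrix (Fin M) (Fin n) ℝ)
    (horth : ∀ a b : Fin n, a ≠ b → (Φᵀ * Φ) a b = 0)
    (ξ : Fin M → ℝ) (hξ : ξ ≠ 0)
    (hξΦ : Φᵀ *ᵥ ξ = 0)
    (sqrtΛ invsqrtΛ : Matrix (Fin M) (Fin M) ℝ)
    (hs : sqrtΛ = Matrix.diagonal fun k => Real.sqrt (lam k))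
    (his : invsqrtΛ = Matrix.diagonal fun k => (Real.sqrt (lam k))⁻¹)
    (A A' G G' : Matrix (Fin M) (Fin M) ℝ)
    (hA : A = sqrtΛ * (Φ * Φᵀ) * sqrtΛ)
    (hA' : A' = sqrtΛ * (Φ * Φᵀ + Matrix.vecMulVec ξ ξ) * sqrtΛ)
    (hG : IsMoorePenroseInv A G)
    (hG' : IsMoorePenroseInv A' G')
    (i : Fin M) :
    (sqrtΛ * A * G * invsqrtΛ) i i ≤ (sqrtΛ * A' * G' * invsqrtΛ) i i := by
  obtain ⟨hAGA, hGAG, hAGt, hGAt⟩ := hG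
  obtain ⟨hAGA', hGAG', hAGt', hGAt'⟩ := hG'
  set P : Matrix (Fin M) (Fin M) ℝ := A * G with hPdef
  set P' : Matrix (Fin M) (Fin M) ℝ := A' * G' with hP'def
  have hssym : sqrtΛᵀ = sqrtΛ := by rw [hs]; exact Matrix.diagonal_transpose _
  have hAsym : Aᵀ = A := by
    rw [hA]
    simp [Matrix.transpose_mul, hssym, Matrix.mul_assoc]
  have hA'sym : A'ᵀ = A' := by
    rw [hA']
    have : (Matrix.vecMulVec ξ ξ)ᵀ = Matrix.vecMulVec ξ ξ := by
      ext a b; simp [Matrix.vecMulVec_apply, mul_comm]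
    simp [Matrix.transpose_mul, Matrix.transpose_add, hssym, this, Matrix.mul_assoc]
  -- kernel of A' is contained in kernel of A
  have hker : ∀ x : Fin M → ℝ, A' *ᵥ x = 0 → A *ᵥ x = 0 := by
    intro x hx
    set y := sqrtΛ *ᵥ x with hy
    set z := Φᵀ *ᵥ y with hz
    have hdot : x ⬝ᵥ (sqrtΛ *ᵥ (Φ *ᵥ z)) = z ⬝ᵥ z := by
      rw [Matrix.dotProduct_mulVec, ← Matrix.mulVec_transpose, hssym, ← hy,
        Matrix.dotProduct_mulVec, ← Matrix.mulVec_transpose, ← hz]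
    have hWv : Matrix.vecMulVec ξ ξ *ᵥ y = (ξ ⬝ᵥ y) • ξ := by
      ext a
      simp [Matrix.mulVec, Matrix.vecMulVec_apply, dotProduct, Finset.mul_sum,
        mul_comm, mul_assoc]
    have hquad : x ⬝ᵥ (A' *ᵥ x) = z ⬝ᵥ z + (ξ ⬝ᵥ y) ^ 2 := by
      rw [hA']
      have : (sqrtΛ * (Φ * Φᵀ + Matrix.vecMulVec ξ ξ) * sqrtΛ) *ᵥ x
          = sqrtΛ *ᵥ (Φ *ᵥ z) + sqrtΛ *ᵥ ((ξ ⬝ᵥ y) • ξ) := by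
        rw [← Matrix.mulVec_mulVec, ← Matrix.mulVec_mulVec, ← hy,
          Matrix.add_mulVec, hWv, Matrix.mulVec_add, ← Matrix.mulVec_mulVec, ← hz]
      rw [this, dotProduct_add, hdot]
      congr 1
      rw [Matrix.dotProduct_mulVec, ← Matrix.mulVec_transpose, hssym, ← hy,
        dotProduct_smul, smul_eq_mul, dotProduct_comm y ξ, sq]
    have h0 : z ⬝ᵥ z + (ξ ⬝ᵥ y) ^ 2 = 0 := by
      rw [← hquad, hx, dotProduct_zero]
    have hz0 : z = 0 := by
      have h1 : (0:ℝ) ≤ z ⬝ᵥ z := by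
        simpa [dotProduct] using Finset.sum_nonneg fun k _ => mul_self_nonneg (z k)
      have h2 : (0:ℝ) ≤ (ξ ⬝ᵥ y) ^ 2 := sq_nonneg _
      have : z ⬝ᵥ z = 0 := le_antisymm (by linarith) h1
      exact (dotProduct_self_eq_zero).1 this
    rw [hA, ← Matrix.mulVec_mulVec, ← Matrix.mulVec_mulVec, ← hy, ← Matrix.mulVec_mulVec,
      ← hz, hz0]
    simp
  -- A' * (1 - P') = 0
  have hA'P' : A' * P' = A' := by
    have : (P' * A')ᵀ = A' * P' := by
      rw [Matrix.transpose_mul, hAGt', hA'sym]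
    rw [← this, hAGA', hA'sym]
  -- hence A * (1 - P') = 0, i.e. A * P' = A
  have hAP' : A * P' = A := by
    have hcols : A * (1 - P') = 0 := by
      ext a b
      have hcol : A' *ᵥ (fun k => (1 - P') k b) = 0 := by
        ext c
        have h := congrFun (congrFun (show A' * (1 - P') = 0 by
          rw [Matrix.mul_sub, Matrix.mul_one, hA'P', sub_self]) c) b
        simpa [Matrix.mul_apply, Matrix.mulVec, dotProduct] using h
      have h := congrFun (hker _ hcol) a
      simpa [Matrix.mul_apply, Matrix.mulVec, dotProduct] using h
    have := hcols
    rw [Matrix.mul_sub, Matrix.mul_one, sub_eq_zero] at this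
    exact this.symm
  have hP'A : P' * A = A := by
    have : (A * P')ᵀ = P' * A := by rw [Matrix.transpose_mul, hAGt', hAsym]
    rw [← this, hAP', hAsym]
  have hP'P : P' * P = P := by
    rw [hPdef, ← Matrix.mul_assoc, hP'A]
  have hPP' : P * P' = P := by
    have : (P' * P)ᵀ = P * P' := by rw [Matrix.transpose_mul, hAGt, hAGt']
    rw [← this, hP'P, hAGt]
  have hPP : P * P = P := by
    nth_rewrite 2 [hPdef]
    rw [← Matrix.mul_assoc, hAGA, hPdef]
  have hP'P' : P' * P' = P' := by
    nth_rewrite 2 [hP'def]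
    rw [← Matrix.mul_assoc, hAGA', hP'def]
  have hDD : (P' - P) * (P' - P) = P' - P := by
    rw [Matrix.sub_mul, Matrix.mul_sub, Matrix.mul_sub, hP'P', hP'P, hPP', hPP]
    abel
  have hDsym : (P' - P)ᵀ = P' - P := by
    rw [Matrix.transpose_sub, hAGt, hAGt']
  have hDnn : 0 ≤ (P' - P) i i := by
    have : (P' - P) i i = ∑ k, ((P' - P) i k) ^ 2 := by
      conv_lhs => rw [← hDD]
      rw [Matrix.mul_apply]
      refine Finset.sum_congr rfl fun k _ => ?_
      have : (P' - P) k i = (P' - P) i k := by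
        conv_lhs => rw [← hDsym]
        simp [Matrix.transpose_apply]
      rw [this, sq]
    rw [this]
    exact Finset.sum_nonneg fun k _ => sq_nonneg _
  -- now compute the diagonal entries
  have hsq : Real.sqrt (lam i) ≠ 0 := by
    exact ne_of_gt (Real.sqrt_pos.2 (hpos i))
  have key : ∀ X : Matrix (Fin M) (Fin M) ℝ,
      (sqrtΛ * X * invsqrtΛ) i i = X i i := by
    intro X
    rw [hs, his, Matrix.mul_diagonal, Matrix.diagonal_mul]
    rw [mul_comm (Real.sqrt (lam i)) (X i i), mul_assoc, mul_inv_cancel₀ hsq, mul_one]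
  have e1 : sqrtΛ * A * G * invsqrtΛ = sqrtΛ * P * invsqrtΛ := by
    rw [hPdef, Matrix.mul_assoc sqrtΛ A G]
  have e2 : sqrtΛ * A' * G' * invsqrtΛ = sqrtΛ * P' * invsqrtΛ := by
    rw [hP'def, Matrix.mul_assoc sqrtΛ A' G']
  rw [e1, e2, key P, key P']
  have := hDnn
  simp only [Matrix.sub_apply] at this
  linarith
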